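/- Let π̂ : ℝ × (−2,2) → ℝ³ be the Legendre map π̂(q₂,α) = (q₁°(q₂,α), q₂, q₃°(q₂,α)). Then the Fréchet derivative of π̂ at (q₂,α) is injective if and only if 4q₂ + 3α·(4−α²)^(3/2) ≠ 0. Equivalently, the singular set of the Legendre map is exactly the curve {(q₂,α) : q₂ = −(3α/4)·(4−α²)^(3/2), α ∈ (−2,2)}. -/

import Mathlib

/-- The `q₁` coordinate of the Legendre embedding of the toy model. -/
noncomputable def q₁circ (q₂ α : ℝ) : ℝ :=
  -α ^ 3 / 2 - 2 * q₂ * (Real.sqrt (4 - α ^ 2))⁻¹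

/-- The `q₃` coordinate of the Legendre embedding of the toy model. -/
noncomputable def q₃circ (q₂ α : ℝ) : ℝ :=
  (3 / 2) * α ^ 2 + q₂ * α * (Real.sqrt (4 - α ^ 2))⁻¹

/-- The Legendre map of the toy model, `π̂(q₂,α) = (q₁°(q₂,α), q₂, q₃°(q₂,α))`. -/
noncomputable def pihat (x : ℝ × ℝ) : ℝ × ℝ × ℝ :=
  (q₁circ x.1 x.2, x.1, q₃circ x.1 x.2)

open ContinuousLinearMap in
/-- The Fréchet derivative of the Legendre map `π̂` at `(q₂,α)` (with `α ∈ (−2,2)`) is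
injective iff `4q₂ + 3α(4−α²)^(3/2) ≠ 0`; equivalently, the singular set of the Legendre map
is exactly the curve `{(q₂,α) : q₂ = −(3α/4)(4−α²)^(3/2)}`. -/
theorem pihat_fderiv_injective_iff (q₂ α : ℝ) (hα : α ∈ Set.Ioo (-2 : ℝ) 2) :
    (Function.Injective (fderiv ℝ pihat (q₂, α))
      ↔ 4 * q₂ + 3 * α * Real.sqrt (4 - α ^ 2) ^ 3 ≠ 0)
    ∧ (¬ Function.Injective (fderiv ℝ pihat (q₂, α))
      ↔ q₂ = -(3 * α / 4) * Real.sqrt (4 - α ^ 2) ^ 3) := by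
  obtain ⟨ha1, ha2⟩ := hα
  have hpos : (0:ℝ) < 4 - α ^ 2 := by nlinarith
  have hs : 0 < Real.sqrt (4 - α ^ 2) := Real.sqrt_pos.mpr hpos
  have hs2 : Real.sqrt (4 - α ^ 2) ^ 2 = 4 - α ^ 2 := Real.sq_sqrt hpos.le
  have hs3 : Real.sqrt (4 - α ^ 2) ^ 3 = (4 - α ^ 2) * Real.sqrt (4 - α ^ 2) := by
    rw [pow_succ, hs2]
  -- derivative of the one-variable function α ↦ (√(4-α²))⁻¹
  have hg : HasDerivAt (fun a : ℝ => (Real.sqrt (4 - a ^ 2))⁻¹)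
      (α / Real.sqrt (4 - α ^ 2) ^ 3) α := by
    have hC := ((Real.hasDerivAt_sqrt hpos.ne').comp α
      ((hasDerivAt_pow 2 α).const_sub 4)).inv hs.ne'
    refine hC.congr_deriv ?_
    rw [hs3, Function.comp_apply]
    field_simp
    rw [hs2]
    ring
  have hfst : HasFDerivAt (fun x : ℝ × ℝ => x.1) (fst ℝ ℝ ℝ) (q₂, α) := hasFDerivAt_fst
  have hsnd : HasFDerivAt (fun x : ℝ × ℝ => x.2) (snd ℝ ℝ ℝ) (q₂, α) := hasFDerivAt_snd
  have hgsnd : HasFDerivAt (fun x : ℝ × ℝ => (Real.sqrt (4 - x.2 ^ 2))⁻¹)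
      ((α / Real.sqrt (4 - α ^ 2) ^ 3) • snd ℝ ℝ ℝ) (q₂, α) :=
    hg.comp_hasFDerivAt (f := fun x : ℝ × ℝ => x.2) (q₂, α) hsnd
  have t1 := (((hasDerivAt_pow 3 α).comp_hasFDerivAt (q₂, α) hsnd).neg.mul_const ((2:ℝ)⁻¹)).sub
    ((hfst.const_mul 2).mul hgsnd)
  have t3 := (((hasDerivAt_pow 2 α).comp_hasFDerivAt (q₂, α) hsnd).const_mul (3/2 : ℝ)).add
    ((hfst.mul hsnd).mul hgsnd)
  have hD' : HasFDerivAt pihat _ (q₂, α) := HasFDerivAt.prodMk t1 (HasFDerivAt.prodMk hfst t3)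
  have hfd := hD'.fderiv
  -- main iff
  have hmain : Function.Injective (fderiv ℝ pihat (q₂, α))
      ↔ 4 * q₂ + 3 * α * Real.sqrt (4 - α ^ 2) ^ 3 ≠ 0 := by
    constructor
    · intro hinj
      intro h0
      have hq : q₂ = -(3 * α / 4) * Real.sqrt (4 - α ^ 2) ^ 3 := by linarith
      have hz : fderiv ℝ pihat (q₂, α) ((0:ℝ), (1:ℝ)) = fderiv ℝ pihat (q₂, α) (0, 0) := by
        rw [hfd]
        simp only [map_zero]
        simp
        constructor
        · rw [hq, hs3]
          field_simp
          ring
        · rw [hq, hs3]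
          field_simp
          ring
      have := hinj hz
      exact one_ne_zero (congrArg Prod.snd this)
    · intro hne
      intro x y hxy
      have h0 : fderiv ℝ pihat (q₂, α) (x - y) = 0 := by
        rw [map_sub, hxy, sub_self]
      rw [hfd] at h0
      simp [Prod.ext_iff] at h0
      obtain ⟨h1, hu, h3⟩ := h0
      rw [hu] at h3
      field_simp at h3
      have h2S : 2 * Real.sqrt (4 - α ^ 2) *
          ((x.2 - y.2) * (4 * q₂ + 3 * α * ((4 - α ^ 2) * Real.sqrt (4 - α ^ 2)))) = 0 := by
        linear_combination 2 * Real.sqrt (4 - α ^ 2) * h3 - (2 * q₂ * (x.2 - y.2) * Real.sqrt (4 - α ^ 2)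
          + 6 * α * (x.2 - y.2) * Real.sqrt (4 - α ^ 2) ^ 2) * hs2
      have hv : (x.2 - y.2) * (4 * q₂ + 3 * α * Real.sqrt (4 - α ^ 2) ^ 3) = 0 := by
        rw [hs3]
        rcases mul_eq_zero.mp h2S with h | h
        · exact absurd h (by positivity)
        · exact h
      have hv0 : x.2 - y.2 = 0 := by
        rcases mul_eq_zero.mp hv with h | h
        · exact h
        · exact absurd h hne
      have hx1 : x.1 = y.1 := by linarith
      have hx2 : x.2 = y.2 := by linarith
      exact Prod.ext hx1 hx2
  refine ⟨hmain, ?_⟩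
  rw [hmain, not_not]
  constructor
  · intro h; linarith
  · intro h; rw [h]; ring
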